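/- Let 𝒢 be a temporal graph with n vertices and lifetime T in which every snapshot has at least one edge, let ω ≥ 0, and let c ≥ 2 and d ≥ 1 be integers. Then there exist integers 0 = t_0 < t_1 < ⋯ < t_ℓ = T with t_i − t_{i−1} ≤ 2d for each 1 ≤ i ≤ ℓ, such that (1 − (1/c + 2/d))·q̃*_ω(𝒢) ≤ Σ_{i=1}^ℓ q̃*_{c,ω}(𝒢_{[t_{i−1}+1,t_i]}) ≤ q̃*_ω(𝒢). (This is the combinatorial core of the paper's main approximation theorem: splitting time into windows of length at most 2d and optimising over at most c parts in each window yields a (1 − (1/c + 2/d))-approximation to the non-normalised temporal modularity.) -/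

import Mathlib

open Finset
open scoped Classical

namespace TemporalModularity

noncomputable section

variable {V : Type*} [Fintype V] {P : Type*}

/-- Twice the number of edges of `G` with both endpoints in `A`
(the sum over ordered pairs of vertices of `A` of the adjacency indicator). -/
def twoE (G : SimpleGraph V) (A : Finset V) : ℝ :=
  ∑ u ∈ A, ∑ v ∈ A, if G.Adj u v then (1 : ℝ) else 0

/-- The degree of `v` in `G`, as a real number. -/
def deg (G : SimpleGraph V) (v : V) : ℝ :=
  ∑ u : V, if G.Adj v u then (1 : ℝ) else 0

/-- The number of edges of `G` (half the sum of the degrees), as a real number. -/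
def numEdges (G : SimpleGraph V) : ℝ := (∑ v : V, deg G v) / 2

/-- The volume of `A` in `G`: the sum of the degrees of the vertices of `A`. -/
def vol (G : SimpleGraph V) (A : Finset V) : ℝ := ∑ v ∈ A, deg G v

/-- The part with label `p` of the vertex partition induced by the labelling `π`. -/
def part (π : V → P) (p : P) : Finset V := univ.filter fun v => π v = p

/-- `Σ_{A ∈ 𝒜} (2 e_G(A) − vol_G(A)² / (2m))`, where `𝒜` is the partition of the
vertices induced by the labelling `π` (empty parts contribute zero). -/
def snapTerm (G : SimpleGraph V) (π : V → P) : ℝ :=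
  ∑ p ∈ univ.image π,
    (twoE G (part π p) - vol G (part π p) ^ 2 / (2 * numEdges G))

/-- The static modularity `q(G,𝒜) = Σ_{A ∈ 𝒜} (e(A)/m − vol(A)²/(4m²))` of the
partition induced by the labelling `π`. -/
def staticQ (G : SimpleGraph V) (π : V → P) : ℝ :=
  ∑ p ∈ univ.image π,
    (twoE G (part π p) / (2 * numEdges G) -
      vol G (part π p) ^ 2 / (4 * numEdges G ^ 2))

/-- The maximum static modularity `q*(G)` over all vertex partitions (every partition
of `V` is induced by some labelling `V → V`). -/
def staticQStar (G : SimpleGraph V) : ℝ := ⨆ π : V → V, staticQ G π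

/-- The loyalty contribution `L(𝒜)` of the temporal partition `π` with lifetime `T`. -/
def loyalty (T : ℕ) (π : V → ℕ → P) : ℝ :=
  ∑ v : V, ∑ t ∈ Icc 1 (T - 1), if π v t = π v (t + 1) then (1 : ℝ) else 0

/-- The per-time loyalty `L(𝒜,t)` of the temporal partition `π`. -/
def loyaltyAt (π : V → ℕ → P) (t : ℕ) : ℝ :=
  ∑ v : V, if π v t = π v (t + 1) then (1 : ℝ) else 0

/-- The normalisation factor `μ_ω(𝒢) = ω n (T−1)/2 + Σ_t m_t`. -/
def mu (G : ℕ → SimpleGraph V) (T : ℕ) (ω : ℝ) : ℝ :=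
  ω * (Fintype.card V) * ((T : ℝ) - 1) / 2 + ∑ t ∈ Icc 1 T, numEdges (G t)

/-- The non-normalised temporal modularity of the restriction of the temporal graph
`G` to the time interval `[a,b]`, for the partition `π`. -/
def qTildeI (G : ℕ → SimpleGraph V) (a b : ℕ) (ω : ℝ) (π : V → ℕ → P) : ℝ :=
  (∑ t ∈ Icc a b, snapTerm (G t) fun v => π v t) +
    ω * ∑ v : V, ∑ t ∈ Icc a (b - 1), if π v t = π v (t + 1) then (1 : ℝ) else 0

/-- The non-normalised temporal modularity `q̃_ω(𝒢,𝒜)` of the partition `π` of the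
temporal graph `G` with lifetime `T`. -/
def qTilde (G : ℕ → SimpleGraph V) (T : ℕ) (ω : ℝ) (π : V → ℕ → P) : ℝ :=
  qTildeI G 1 T ω π

/-- The temporal modularity `q_ω(𝒢,𝒜)` of the partition `π` of the temporal graph `G`
with lifetime `T`. -/
def qTemp (G : ℕ → SimpleGraph V) (T : ℕ) (ω : ℝ) (π : V → ℕ → P) : ℝ :=
  qTilde G T ω π / (2 * mu G T ω)

/-- The temporal modularity `q*_ω(𝒢)`: the maximum of `q_ω(𝒢,𝒜)` over all partitions
(every partition of `V × [T]` is induced by some labelling into `ℕ`). -/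
def qTempStar (G : ℕ → SimpleGraph V) (T : ℕ) (ω : ℝ) : ℝ :=
  ⨆ π : V → ℕ → ℕ, qTemp G T ω π

/-- The temporal `k`-modularity `q*_{k,ω}(𝒢)`: the maximum of `q_ω(𝒢,𝒜)` over all
partitions into at most `k` parts. -/
def qTempStarK (G : ℕ → SimpleGraph V) (T : ℕ) (ω : ℝ) (k : ℕ) : ℝ :=
  ⨆ π : V → ℕ → Fin k, qTemp G T ω π

/-- The maximum non-normalised temporal modularity of the restriction of `G` to the
time interval `[a,b]`, over all partitions. -/
def qTildeStarI (G : ℕ → SimpleGraph V) (a b : ℕ) (ω : ℝ) : ℝ :=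
  ⨆ π : V → ℕ → ℕ, qTildeI G a b ω π

/-- The non-normalised temporal modularity `q̃*_ω(𝒢)` of the temporal graph `G` with
lifetime `T`. -/
def qTildeStar (G : ℕ → SimpleGraph V) (T : ℕ) (ω : ℝ) : ℝ := qTildeStarI G 1 T ω

/-- The maximum non-normalised temporal modularity of the restriction of `G` to `[a,b]`
over partitions into at most `c` parts. -/
def qTildeStarKI (G : ℕ → SimpleGraph V) (a b : ℕ) (ω : ℝ) (c : ℕ) : ℝ :=
  ⨆ π : V → ℕ → Fin c, qTildeI G a b ω π

/-- The non-normalised temporal `c`-modularity `q̃*_{c,ω}(𝒢)`. -/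
def qTildeStarK (G : ℕ → SimpleGraph V) (T : ℕ) (ω : ℝ) (c : ℕ) : ℝ :=
  qTildeStarKI G 1 T ω c

end


section Aux

variable {V : Type*} [Fintype V]

/-- Classical indicator. -/
noncomputable def ind (p : Prop) : ℝ := if p then 1 else 0

lemma ind_of_ite (p : Prop) [Decidable p] : (if p then (1:ℝ) else 0) = ind p := by
  unfold ind
  by_cases h : p
  · rw [if_pos h, if_pos h]
  · rw [if_neg h, if_neg h]

lemma ind_nonneg (p : Prop) : 0 ≤ ind p := by
  unfold ind; split <;> norm_num

lemma ind_le_one (p : Prop) : ind p ≤ 1 := by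
  unfold ind; split <;> norm_num

lemma ind_le_ind {p q : Prop} (h : p → q) : ind p ≤ ind q := by
  unfold ind
  by_cases hp : p
  · rw [if_pos hp, if_pos (h hp)]
  · rw [if_neg hp]
    split <;> norm_num

lemma ind_true {p : Prop} (h : p) : ind p = 1 := by unfold ind; rw [if_pos h]

lemma ind_congr {p q : Prop} (h : p ↔ q) : ind p = ind q := by
  unfold ind
  by_cases hp : p
  · rw [if_pos hp, if_pos (h.mp hp)]
  · rw [if_neg hp, if_neg (fun hq => hp (h.mpr hq))]

/-- The pair weight. -/
noncomputable def Wt (G : SimpleGraph V) (u v : V) : ℝ :=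
  (if G.Adj u v then 1 else 0) - deg G u * deg G v / (2 * numEdges G)

lemma deg_nonneg (G : SimpleGraph V) (v : V) : 0 ≤ deg G v := by
  unfold deg; positivity

lemma numEdges_nonneg (G : SimpleGraph V) : 0 ≤ numEdges G := by
  unfold numEdges
  have h : 0 ≤ ∑ v : V, deg G v := Finset.sum_nonneg fun v _ => deg_nonneg G v
  linarith

lemma snapTerm_pair {P : Type*} (G : SimpleGraph V) (π : V → P) :
    snapTerm G π = ∑ u : V, ∑ v : V, Wt G u v * ind (π u = π v) := by
  classical
  unfold snapTerm
  have hterm : ∀ p, twoE G (part π p) - vol G (part π p) ^ 2 / (2 * numEdges G)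
      = ∑ u ∈ part π p, ∑ v : V, (if π v = p then Wt G u v else 0) := by
    intro p
    have h2 : vol G (part π p) ^ 2
        = ∑ u ∈ part π p, ∑ v ∈ part π p, deg G u * deg G v := by
      rw [sq]; unfold vol; rw [Finset.sum_mul_sum]
    unfold twoE
    rw [h2, Finset.sum_div, ← Finset.sum_sub_distrib]
    refine Finset.sum_congr rfl fun u _ => ?_
    rw [Finset.sum_div, ← Finset.sum_sub_distrib]
    unfold part
    rw [Finset.sum_filter]
    rfl
  rw [Finset.sum_congr rfl fun p _ => hterm p]
  have hfib : ∀ p ∈ univ.image π, ∑ u ∈ part π p, ∑ v : V, (if π v = p then Wt G u v else 0)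
      = ∑ u ∈ univ.filter (fun u => π u = p), ∑ v : V, (if π v = π u then Wt G u v else 0) := by
    intro p _
    unfold part
    refine Finset.sum_congr rfl fun u hu => ?_
    rw [Finset.mem_filter] at hu
    rw [hu.2]
  rw [Finset.sum_congr rfl hfib,
    Finset.sum_fiberwise_of_maps_to (fun u _ => Finset.mem_image_of_mem π (Finset.mem_univ u))]
  refine Finset.sum_congr rfl fun u _ => Finset.sum_congr rfl fun v _ => ?_
  unfold ind
  by_cases h : π v = π u
  · rw [if_pos h, if_pos h.symm, mul_one]
  · rw [if_neg h, if_neg (fun e => h e.symm), mul_zero]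

lemma Wt_sum (G : SimpleGraph V) (hm : numEdges G ≠ 0) :
    ∑ u : V, ∑ v : V, Wt G u v = 0 := by
  unfold Wt
  have h1 : ∑ u : V, ∑ v : V, (if G.Adj u v then (1:ℝ) else 0) = 2 * numEdges G := by
    unfold numEdges deg; ring
  have h2 : ∑ u : V, ∑ v : V, deg G u * deg G v / (2 * numEdges G)
      = ((∑ u : V, deg G u) * ∑ v : V, deg G v) / (2 * numEdges G) := by
    rw [Finset.sum_mul_sum, Finset.sum_div]
    exact Finset.sum_congr rfl fun u _ => (Finset.sum_div _ _ _).symm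
  have h3 : (∑ v : V, deg G v) = 2 * numEdges G := by unfold numEdges; ring
  simp only [Finset.sum_sub_distrib, h1, h2, h3]
  field_simp
  ring

lemma Wt_mul_ind_le_one {P : Type*} (G : SimpleGraph V) (u v : V) (x y : P) :
    Wt G u v * ind (x = y) ≤ 1 := by
  have hW : Wt G u v ≤ 1 := by
    unfold Wt
    have h0 : 0 ≤ deg G u * deg G v / (2 * numEdges G) := by
      have := deg_nonneg G u; have := deg_nonneg G v; have := numEdges_nonneg G
      positivity
    have : (if G.Adj u v then (1:ℝ) else 0) ≤ 1 := by split <;> norm_num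
    linarith
  unfold ind
  by_cases h : x = y
  · rw [if_pos h, mul_one]; exact hW
  · rw [if_neg h, mul_zero]; norm_num

lemma snapTerm_le_card_sq {P : Type*} (G : SimpleGraph V) (π : V → P) :
    snapTerm G π ≤ (Fintype.card V : ℝ) ^ 2 := by
  rw [snapTerm_pair]
  calc ∑ u : V, ∑ v : V, Wt G u v * ind (π u = π v)
      ≤ ∑ _u : V, ∑ _v : V, (1:ℝ) :=
        Finset.sum_le_sum fun u _ => Finset.sum_le_sum fun v _ => Wt_mul_ind_le_one G u v _ _
    _ = (Fintype.card V : ℝ) ^ 2 := by simp [sq]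

lemma qTildeI_le_bound {P : Type*} (G : ℕ → SimpleGraph V) (a b : ℕ) {ω : ℝ} (hω : 0 ≤ ω)
    (π : V → ℕ → P) :
    qTildeI G a b ω π ≤ ((Icc a b).card : ℝ) * (Fintype.card V : ℝ) ^ 2 +
      ω * ((Fintype.card V : ℝ) * ((Icc a (b-1)).card : ℝ)) := by
  unfold qTildeI
  simp only [ind_of_ite]
  have h1 : (∑ t ∈ Icc a b, snapTerm (G t) fun v => π v t)
      ≤ ((Icc a b).card : ℝ) * (Fintype.card V : ℝ) ^ 2 := by
    calc (∑ t ∈ Icc a b, snapTerm (G t) fun v => π v t)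
        ≤ ∑ _t ∈ Icc a b, (Fintype.card V : ℝ) ^ 2 :=
          Finset.sum_le_sum fun t _ => snapTerm_le_card_sq _ _
      _ = ((Icc a b).card : ℝ) * (Fintype.card V : ℝ) ^ 2 := by
          rw [Finset.sum_const, nsmul_eq_mul]
  have h2 : (∑ v : V, ∑ t ∈ Icc a (b-1), ind (π v t = π v (t + 1)))
      ≤ (Fintype.card V : ℝ) * ((Icc a (b-1)).card : ℝ) := by
    calc (∑ v : V, ∑ t ∈ Icc a (b-1), ind (π v t = π v (t + 1)))
        ≤ ∑ _v : V, ∑ _t ∈ Icc a (b-1), (1:ℝ) :=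
          Finset.sum_le_sum fun v _ => Finset.sum_le_sum fun t _ => ind_le_one _
      _ = (Fintype.card V : ℝ) * ((Icc a (b-1)).card : ℝ) := by simp
  nlinarith [mul_le_mul_of_nonneg_left h2 hω]

lemma bddAbove_qTildeI {P : Type*} (G : ℕ → SimpleGraph V) (a b : ℕ) {ω : ℝ} (hω : 0 ≤ ω) :
    BddAbove (Set.range fun π : V → ℕ → P => qTildeI G a b ω π) := by
  refine ⟨((Icc a b).card : ℝ) * (Fintype.card V : ℝ) ^ 2 +
      ω * ((Fintype.card V : ℝ) * ((Icc a (b-1)).card : ℝ)), ?_⟩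
  rintro x ⟨π, rfl⟩
  exact qTildeI_le_bound G a b hω π

lemma numEdges_pos (G : SimpleGraph V) (hE : G.edgeSet.Nonempty) : 0 < numEdges G := by
  obtain ⟨e, he⟩ := hE
  induction e with
  | h u v =>
    rw [SimpleGraph.mem_edgeSet] at he
    have hdeg : (1:ℝ) ≤ deg G u := by
      unfold deg
      calc (1:ℝ) = ∑ x ∈ {v}, (if G.Adj u x then (1:ℝ) else 0) := by rw [Finset.sum_singleton, if_pos he]
        _ ≤ ∑ x : V, (if G.Adj u x then (1:ℝ) else 0) := by
            refine Finset.sum_le_sum_of_subset_of_nonneg (Finset.subset_univ _) ?_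
            intro x _ _; split <;> norm_num
    have hsum : (1:ℝ) ≤ ∑ v : V, deg G v := by
      calc (1:ℝ) ≤ deg G u := hdeg
        _ = ∑ x ∈ {u}, deg G x := by simp
        _ ≤ ∑ v : V, deg G v :=
            Finset.sum_le_sum_of_subset_of_nonneg (Finset.subset_univ _)
              (fun x _ _ => deg_nonneg G x)
    unfold numEdges
    linarith
lemma sum_collision {c : ℕ} (hc : 0 < c) (S : Finset ℕ) (x y : ℕ) (hx : x ∈ S) (hy : y ∈ S) :
    ∑ g : (↥S → Fin c), ind (g ⟨x, hx⟩ = g ⟨y, hy⟩)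
    = (Fintype.card (↥S → Fin c) : ℝ) *
        ((1 - 1/(c:ℝ)) * ind (x = y) + 1/c) := by
  classical
  have hc' : (c:ℝ) ≠ 0 := Nat.cast_ne_zero.mpr hc.ne'
  by_cases hxy : x = y
  · have hpq : (⟨x, hx⟩ : ↥S) = ⟨y, hy⟩ := Subtype.ext hxy
    rw [ind_true hxy]
    have hall : ∀ g : ↥S → Fin c, ind (g ⟨x, hx⟩ = g ⟨y, hy⟩) = 1 :=
      fun g => ind_true (by rw [hpq])
    rw [Finset.sum_congr rfl fun g _ => hall g, Finset.sum_const, Finset.card_univ,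
      nsmul_eq_mul, mul_one]
    field_simp
    ring
  · have hpq : (⟨x, hx⟩ : ↥S) ≠ (⟨y, hy⟩ : ↥S) := fun h => hxy (congrArg Subtype.val h)
    have : ind (x = y) = 0 := by unfold ind; rw [if_neg hxy]
    rw [this, mul_zero, zero_add]
    set p : ↥S := ⟨x, hx⟩
    set q : ↥S := ⟨y, hy⟩
    have key : ∑ g : (↥S → Fin c), ind (g p = g q)
        = (Fintype.card ({j : ↥S // j ≠ p} → Fin c) : ℝ) := by
      rw [← Equiv.sum_comp (Equiv.funSplitAt p (Fin c)).symm
        (fun g => ind (g p = g q)), Fintype.sum_prod_type]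
      have heval : ∀ (k : Fin c) (h : {j : ↥S // j ≠ p} → Fin c),
          ((Equiv.funSplitAt p (Fin c)).symm (k, h)) p = k ∧
          ((Equiv.funSplitAt p (Fin c)).symm (k, h)) q = h ⟨q, fun e => hpq e.symm⟩ := by
        intro k h
        constructor
        · simp [Equiv.funSplitAt, Equiv.piSplitAt_symm_apply]
        · simp only [Equiv.funSplitAt, Equiv.piSplitAt_symm_apply]
          rw [dif_neg (fun e : q = p => hpq e.symm)]
      calc ∑ k : Fin c, ∑ h : {j : ↥S // j ≠ p} → Fin c,
            ind (((Equiv.funSplitAt p (Fin c)).symm (k, h)) p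
              = ((Equiv.funSplitAt p (Fin c)).symm (k, h)) q)
          = ∑ k : Fin c, ∑ h : {j : ↥S // j ≠ p} → Fin c,
            ind (k = h ⟨q, fun e => hpq e.symm⟩) := by
            refine Finset.sum_congr rfl fun k _ => Finset.sum_congr rfl fun h _ => ?_
            rw [(heval k h).1, (heval k h).2]
        _ = ∑ h : {j : ↥S // j ≠ p} → Fin c, ∑ k : Fin c,
            ind (k = h ⟨q, fun e => hpq e.symm⟩) := Finset.sum_comm
        _ = ∑ _h : {j : ↥S // j ≠ p} → Fin c, (1:ℝ) := by
            refine Finset.sum_congr rfl fun h _ => ?_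
            simp only [← ind_of_ite]
            rw [Finset.sum_ite_eq' Finset.univ]
            simp
        _ = (Fintype.card ({j : ↥S // j ≠ p} → Fin c) : ℝ) := by
            rw [Finset.sum_const, Finset.card_univ, nsmul_eq_mul, mul_one]
    rw [key]
    have hcards : Fintype.card {j : ↥S // j ≠ p} = Fintype.card ↥S - 1 := by
      have := Fintype.card_subtype_compl (fun j : ↥S => j = p)
      simp only [Fintype.card_subtype_eq] at this
      exact this
    have hpos : 1 ≤ Fintype.card ↥S := Fintype.card_pos_iff.mpr ⟨p⟩
    rw [Fintype.card_fun, Fintype.card_fun, hcards, Fintype.card_fin]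
    have hexp : c ^ Fintype.card ↥S = c ^ (Fintype.card ↥S - 1) * c := by
      rw [← pow_succ, Nat.sub_add_cancel hpos]
    rw [hexp]
    push_cast
    field_simp
lemma window_c (G : ℕ → SimpleGraph V) (a b : ℕ)
    (hm : ∀ t ∈ Icc a b, numEdges (G t) ≠ 0) {ω : ℝ} (hω : 0 ≤ ω)
    {c : ℕ} (hc : 0 < c) (π : V → ℕ → ℕ) :
    ∃ ρ : V → ℕ → Fin c,
      (1 - 1/(c:ℝ)) * (∑ t ∈ Icc a b, snapTerm (G t) fun v => π v t) +
        ω * ∑ v : V, ∑ s ∈ Icc a (b-1), ind (π v s = π v (s+1))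
      ≤ qTildeI G a b ω ρ := by
  classical
  set Sf : Finset ℕ := (univ ×ˢ Icc a b).image (fun x : V × ℕ => π x.1 x.2) with hSf
  have hmem : ∀ (v : V) (t : ℕ), t ∈ Icc a b → π v t ∈ Sf := by
    intro v t ht
    have hp : ((v, t) : V × ℕ) ∈ univ ×ˢ Icc a b :=
      Finset.mem_product.mpr ⟨Finset.mem_univ v, ht⟩
    exact Finset.mem_image_of_mem _ hp
  haveI hne : Nonempty (↥Sf → Fin c) := ⟨fun _ => ⟨0, hc⟩⟩
  set ext : (↥Sf → Fin c) → ℕ → Fin c :=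
    fun g x => if hx : x ∈ Sf then g ⟨x, hx⟩ else ⟨0, hc⟩ with hext
  set K : ℝ := (Fintype.card (↥Sf → Fin c) : ℝ) with hK
  have hKpos : 0 < K := by
    rw [hK]
    exact_mod_cast Fintype.card_pos
  -- snapshot expectation identity
  have hsnap : ∀ t ∈ Icc a b,
      ∑ g : ↥Sf → Fin c, snapTerm (G t) (fun v => ext g (π v t))
      = K * ((1 - 1/(c:ℝ)) * snapTerm (G t) fun v => π v t) := by
    intro t ht
    have hcol : ∀ u v : V,
        ∑ g : ↥Sf → Fin c, ind (ext g (π u t) = ext g (π v t))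
        = K * ((1 - 1/(c:ℝ)) * ind (π u t = π v t) + 1/c) := by
      intro u v
      have hu := hmem u t ht
      have hv := hmem v t ht
      have h1 : ∀ g : ↥Sf → Fin c, ext g (π u t) = g ⟨π u t, hu⟩ := fun g => dif_pos hu
      have h2 : ∀ g : ↥Sf → Fin c, ext g (π v t) = g ⟨π v t, hv⟩ := fun g => dif_pos hv
      calc ∑ g : ↥Sf → Fin c, ind (ext g (π u t) = ext g (π v t))
          = ∑ g : ↥Sf → Fin c, ind (g ⟨π u t, hu⟩ = g ⟨π v t, hv⟩) := by
            refine Finset.sum_congr rfl fun g _ => ?_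
            rw [h1 g, h2 g]
        _ = K * ((1 - 1/(c:ℝ)) * ind (π u t = π v t) + 1/c) := by
            rw [sum_collision hc Sf _ _ hu hv]
    calc ∑ g : ↥Sf → Fin c, snapTerm (G t) (fun v => ext g (π v t))
        = ∑ g : ↥Sf → Fin c, ∑ u : V, ∑ v : V,
            Wt (G t) u v * ind (ext g (π u t) = ext g (π v t)) :=
          Finset.sum_congr rfl fun g _ => snapTerm_pair _ _
      _ = ∑ u : V, ∑ v : V, Wt (G t) u v *
            ∑ g : ↥Sf → Fin c, ind (ext g (π u t) = ext g (π v t)) := by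
          rw [Finset.sum_comm]
          refine Finset.sum_congr rfl fun u _ => ?_
          rw [Finset.sum_comm]
          refine Finset.sum_congr rfl fun v _ => ?_
          rw [← Finset.mul_sum]
      _ = ∑ u : V, ∑ v : V, (K * (1 - 1/(c:ℝ)) *
            (Wt (G t) u v * ind (π u t = π v t)) + K * (1/(c:ℝ)) * Wt (G t) u v) := by
          refine Finset.sum_congr rfl fun u _ => Finset.sum_congr rfl fun v _ => ?_
          rw [hcol u v]
          ring
      _ = K * (1 - 1/(c:ℝ)) *
            (∑ u : V, ∑ v : V, Wt (G t) u v * ind (π u t = π v t)) +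
          K * (1/(c:ℝ)) * (∑ u : V, ∑ v : V, Wt (G t) u v) := by
          simp only [Finset.sum_add_distrib, Finset.mul_sum]
      _ = K * ((1 - 1/(c:ℝ)) * snapTerm (G t) fun v => π v t) := by
          rw [Wt_sum (G t) (hm t ht), mul_zero, add_zero, ← snapTerm_pair]
          ring
  -- loyalty pointwise bound
  have hloy : ∀ g : ↥Sf → Fin c,
      (∑ v : V, ∑ s ∈ Icc a (b-1), ind (π v s = π v (s+1)))
      ≤ ∑ v : V, ∑ s ∈ Icc a (b-1), ind (ext g (π v s) = ext g (π v (s+1))) :=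
    fun g => Finset.sum_le_sum fun v _ => Finset.sum_le_sum fun s _ =>
      ind_le_ind (congrArg (ext g))
  -- expectation of qTildeI
  have hq : ∀ ρ : V → ℕ → Fin c, qTildeI G a b ω ρ
      = (∑ t ∈ Icc a b, snapTerm (G t) fun v => ρ v t) +
        ω * ∑ v : V, ∑ s ∈ Icc a (b-1), ind (ρ v s = ρ v (s+1)) := by
    intro ρ
    unfold qTildeI
    simp only [ind_of_ite]
  have hsum : K * ((1 - 1/(c:ℝ)) * (∑ t ∈ Icc a b, snapTerm (G t) fun v => π v t) +
        ω * ∑ v : V, ∑ s ∈ Icc a (b-1), ind (π v s = π v (s+1)))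
      ≤ ∑ g : ↥Sf → Fin c, qTildeI G a b ω (fun v s => ext g (π v s)) := by
    rw [Finset.sum_congr rfl fun g (_ : g ∈ Finset.univ) => hq (fun v s => ext g (π v s))]
    rw [Finset.sum_add_distrib]
    have hA : ∑ g : ↥Sf → Fin c, ∑ t ∈ Icc a b, snapTerm (G t) (fun v => ext g (π v t))
        = K * ((1 - 1/(c:ℝ)) * (∑ t ∈ Icc a b, snapTerm (G t) fun v => π v t)) := by
      rw [Finset.sum_comm, Finset.sum_congr rfl hsnap, ← Finset.mul_sum, ← Finset.mul_sum]
    have hB : K * (ω * ∑ v : V, ∑ s ∈ Icc a (b-1), ind (π v s = π v (s+1)))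
        ≤ ∑ g : ↥Sf → Fin c,
            ω * ∑ v : V, ∑ s ∈ Icc a (b-1), ind (ext g (π v s) = ext g (π v (s+1))) := by
      calc K * (ω * ∑ v : V, ∑ s ∈ Icc a (b-1), ind (π v s = π v (s+1)))
          = ∑ _g : ↥Sf → Fin c,
              ω * ∑ v : V, ∑ s ∈ Icc a (b-1), ind (π v s = π v (s+1)) := by
            rw [Finset.sum_const, Finset.card_univ, nsmul_eq_mul, hK]
        _ ≤ _ := Finset.sum_le_sum fun g _ => mul_le_mul_of_nonneg_left (hloy g) hω
    calc K * ((1 - 1/(c:ℝ)) * (∑ t ∈ Icc a b, snapTerm (G t) fun v => π v t) +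
          ω * ∑ v : V, ∑ s ∈ Icc a (b-1), ind (π v s = π v (s+1)))
        = K * ((1 - 1/(c:ℝ)) * (∑ t ∈ Icc a b, snapTerm (G t) fun v => π v t)) +
          K * (ω * ∑ v : V, ∑ s ∈ Icc a (b-1), ind (π v s = π v (s+1))) := by ring
      _ ≤ _ := by
          rw [← hA]
          exact add_le_add_right hB _
  -- extract a good ρ
  by_contra hcon
  push_neg at hcon
  have hlt : ∑ g : ↥Sf → Fin c, qTildeI G a b ω (fun v s => ext g (π v s))
      < ∑ _g : ↥Sf → Fin c,
          ((1 - 1/(c:ℝ)) * (∑ t ∈ Icc a b, snapTerm (G t) fun v => π v t) +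
            ω * ∑ v : V, ∑ s ∈ Icc a (b-1), ind (π v s = π v (s+1))) :=
    Finset.sum_lt_sum_of_nonempty Finset.univ_nonempty fun g _ => hcon _
  rw [Finset.sum_const, Finset.card_univ, nsmul_eq_mul, ← hK] at hlt
  linarith
lemma sum_windows_eq (t : ℕ → ℕ) (hmono : ∀ i, t i ≤ t (i+1)) (f : ℕ → ℝ) (L : ℕ) :
    ∑ i ∈ Finset.range L, ∑ s ∈ Ioc (t i) (t (i+1)), f s = ∑ s ∈ Ioc (t 0) (t L), f s := by
  induction L with
  | zero => simp
  | succ L ih =>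
    rw [Finset.sum_range_succ, ih,
      Finset.sum_Ioc_consecutive f (monotone_nat_of_le_succ hmono (Nat.zero_le L)) (hmono L)]

lemma sum_windows_le (t : ℕ → ℕ) (hmono : ∀ i, t i ≤ t (i+1)) (h0 : t 0 = 0)
    (f : ℕ → ℝ) (hf : ∀ s, 0 ≤ f s) (L : ℕ) :
    ∑ i ∈ Finset.range L, ∑ s ∈ Ioc (t i) (t (i+1) - 1), f s
      ≤ ∑ s ∈ Ioc 0 (t L - 1), f s := by
  induction L with
  | zero => exact Finset.sum_nonneg fun s _ => hf s
  | succ L ih =>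
    rw [Finset.sum_range_succ]
    have h1 : ∑ s ∈ Ioc (t L) (t (L+1) - 1), f s ≤ ∑ s ∈ Ioc (t L - 1) (t (L+1) - 1), f s :=
      Finset.sum_le_sum_of_subset_of_nonneg
        (Finset.Ioc_subset_Ioc_left (Nat.sub_le _ _)) (fun s _ _ => hf s)
    have h2 : ∑ s ∈ Ioc 0 (t L - 1), f s + ∑ s ∈ Ioc (t L - 1) (t (L+1) - 1), f s
        = ∑ s ∈ Ioc 0 (t (L+1) - 1), f s :=
      Finset.sum_Ioc_consecutive f (Nat.zero_le _) (Nat.sub_le_sub_right (hmono L) 1)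
    linarith
lemma sum_windows_ge (t : ℕ → ℕ) (hmono : ∀ i, t i ≤ t (i+1)) (h0 : t 0 = 0)
    (f : ℕ → ℝ) (hf : ∀ s, 0 ≤ f s) {C : ℝ} (hC : ∀ s, f s ≤ C) (hC0 : 0 ≤ C)
    (L T : ℕ) (hTL : t L = T) (hT : 1 ≤ T) :
    ∑ s ∈ Ioc 0 (T-1), f s
      ≤ (∑ i ∈ Finset.range L, ∑ s ∈ Ioc (t i) (t (i+1) - 1), f s) + L * C := by
  set f' : ℕ → ℝ := fun s => if s + 1 ≤ T then f s else 0 with hf'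
  have hf'le : ∀ s, f' s ≤ f s := by
    intro s
    rw [hf']
    dsimp only
    split
    · exact le_refl _
    · exact hf s
  have hf'C : ∀ s, f' s ≤ C := by
    intro s
    rw [hf']
    dsimp only
    split
    · exact hC s
    · exact hC0
  have stepA : ∑ s ∈ Ioc 0 (T-1), f s = ∑ s ∈ Ioc 0 T, f' s := by
    have hT' : T = (T - 1) + 1 := by omega
    rw [hT', Finset.sum_Ioc_succ_top (Nat.zero_le _) f']
    have hend : f' (T - 1 + 1) = 0 := by
      rw [hf']
      dsimp only
      rw [if_neg (by omega)]
    rw [hend, add_zero]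
    refine Finset.sum_congr rfl fun s hs => ?_
    rw [Finset.mem_Ioc] at hs
    rw [hf']
    dsimp only
    rw [if_pos (by omega)]
  have stepB : ∑ s ∈ Ioc 0 T, f' s
      = ∑ i ∈ Finset.range L, ∑ s ∈ Ioc (t i) (t (i+1)), f' s := by
    rw [sum_windows_eq t hmono f' L, h0, hTL]
  have stepC : ∀ i, ∑ s ∈ Ioc (t i) (t (i+1)), f' s
      ≤ ∑ s ∈ Ioc (t i) (t (i+1) - 1), f s + C := by
    intro i
    rcases Nat.eq_or_lt_of_le (hmono i) with heq | hlt
    · rw [← heq]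
      simp only [Finset.Ioc_self, Finset.sum_empty]
      have : (0:ℝ) ≤ ∑ s ∈ Ioc (t i) (t i - 1), f s := Finset.sum_nonneg fun s _ => hf s
      rw [← heq] at *
      linarith
    · have h1 : t (i+1) = (t (i+1) - 1) + 1 := by omega
      rw [h1, Finset.sum_Ioc_succ_top (by omega) f']
      simp only [Nat.add_sub_cancel]
      have h2 : ∑ s ∈ Ioc (t i) (t (i+1) - 1), f' s ≤ ∑ s ∈ Ioc (t i) (t (i+1) - 1), f s :=
        Finset.sum_le_sum fun s _ => hf'le s
      have h3 := hf'C (t (i+1) - 1 + 1)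
      linarith
  calc ∑ s ∈ Ioc 0 (T-1), f s
      = ∑ i ∈ Finset.range L, ∑ s ∈ Ioc (t i) (t (i+1)), f' s := by rw [stepA, stepB]
    _ ≤ ∑ i ∈ Finset.range L, (∑ s ∈ Ioc (t i) (t (i+1) - 1), f s + C) :=
        Finset.sum_le_sum fun i _ => stepC i
    _ = (∑ i ∈ Finset.range L, ∑ s ∈ Ioc (t i) (t (i+1) - 1), f s) + L * C := by
        rw [Finset.sum_add_distrib, Finset.sum_const, Finset.card_range, nsmul_eq_mul]
lemma qTildeI_ind {P : Type*} (G : ℕ → SimpleGraph V) (a b : ℕ) (ω : ℝ) (ρ : V → ℕ → P) :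
    qTildeI G a b ω ρ = (∑ t ∈ Icc a b, snapTerm (G t) fun v => ρ v t) +
      ω * ∑ v : V, ∑ s ∈ Icc a (b-1), ind (ρ v s = ρ v (s+1)) := by
  unfold qTildeI
  simp only [ind_of_ite]

lemma snapTerm_const_zero (G : SimpleGraph V) (hm : numEdges G ≠ 0) :
    snapTerm G (fun _ : V => (0:ℕ)) = 0 := by
  rw [snapTerm_pair]
  calc ∑ u : V, ∑ v : V, Wt G u v * ind ((0:ℕ) = 0)
      = ∑ u : V, ∑ v : V, Wt G u v := by
        refine Finset.sum_congr rfl fun u _ => Finset.sum_congr rfl fun v _ => ?_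
        rw [ind_true rfl, mul_one]
    _ = 0 := Wt_sum G hm

lemma qTildeStar_ge_loyal (G : ℕ → SimpleGraph V) (T : ℕ) (hT : 1 ≤ T)
    (hm : ∀ t ∈ Icc 1 T, numEdges (G t) ≠ 0) {ω : ℝ} (hω : 0 ≤ ω) :
    ω * (Fintype.card V : ℝ) * ((T:ℝ) - 1) ≤ qTildeStar G T ω := by
  have hval : qTildeI G 1 T ω (fun (_ : V) (_ : ℕ) => (0:ℕ))
      = ω * (Fintype.card V : ℝ) * ((T:ℝ) - 1) := by
    rw [qTildeI_ind]
    have h1 : (∑ t ∈ Icc 1 T, snapTerm (G t) fun _ : V => (0:ℕ)) = 0 :=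
      Finset.sum_eq_zero fun t ht => snapTerm_const_zero (G t) (hm t ht)
    have h2 : (∑ _v : V, ∑ _s ∈ Icc 1 (T-1), (1:ℝ))
        = (Fintype.card V : ℝ) * ((T:ℝ) - 1) := by
      rw [Finset.sum_const, Finset.sum_const, Nat.card_Icc]
      simp only [nsmul_eq_mul, Finset.card_univ, mul_one]
      have : ((T - 1 + 1 - 1 : ℕ) : ℝ) = (T:ℝ) - 1 := by
        have : T - 1 + 1 - 1 = T - 1 := by omega
        rw [this, Nat.cast_sub hT, Nat.cast_one]
      rw [this]
    rw [h1, zero_add]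
    rw [Finset.sum_congr rfl fun v (_ : v ∈ Finset.univ) =>
      Finset.sum_congr rfl fun s (_ : s ∈ Icc 1 (T-1)) => ind_true rfl]
    rw [h2]
    ring
  have hle := le_ciSup (bddAbove_qTildeI G 1 T hω) (fun (_ : V) (_ : ℕ) => (0:ℕ))
  rw [hval] at hle
  exact hle

lemma qTildeStar_nonneg (G : ℕ → SimpleGraph V) (T : ℕ) (hT : 1 ≤ T)
    (hm : ∀ t ∈ Icc 1 T, numEdges (G t) ≠ 0) {ω : ℝ} (hω : 0 ≤ ω) :
    0 ≤ qTildeStar G T ω := by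
  have h := qTildeStar_ge_loyal G T hT hm hω
  have : (0:ℝ) ≤ ω * (Fintype.card V : ℝ) * ((T:ℝ) - 1) := by
    have h1 : (1:ℝ) ≤ (T:ℝ) := by exact_mod_cast hT
    have h2 : (0:ℝ) ≤ (Fintype.card V : ℝ) := Nat.cast_nonneg _
    exact mul_nonneg (mul_nonneg hω h2) (by linarith)
  linarith

lemma snapTerm_relabel {P Q : Type*} (G : SimpleGraph V) (ρ : V → P) (ι : P → Q)
    (hι : ∀ u v : V, ι (ρ u) = ι (ρ v) ↔ ρ u = ρ v) :
    snapTerm G (fun v => ι (ρ v)) = snapTerm G ρ := by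
  rw [snapTerm_pair, snapTerm_pair]
  exact Finset.sum_congr rfl fun u _ => Finset.sum_congr rfl fun v _ => by
    rw [ind_congr (hι u v)]
lemma Icc_one_eq_Ioc (b : ℕ) : Icc 1 b = Ioc 0 b := by
  ext x
  simp only [Finset.mem_Icc, Finset.mem_Ioc]
  omega

lemma Icc_succ_eq_Ioc (a b : ℕ) : Icc (a+1) b = Ioc a b := by
  ext x
  simp only [Finset.mem_Icc, Finset.mem_Ioc]
  omega

end Aux

/-- For any integers `c ≥ 2` and `d ≥ 1` there exist
`0 = t_0 < t_1 < ⋯ < t_ℓ = T` with `t_i − t_{i−1} ≤ 2d` for each `i`, such that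
`(1 − (1/c + 2/d))·q̃*_ω(𝒢) ≤ Σ_{i=1}^ℓ q̃*_{c,ω}(𝒢_{[t_{i−1}+1,t_i]}) ≤ q̃*_ω(𝒢)`. -/
theorem qTildeStar_window_c_approximation {V : Type*} [Fintype V]
    (T : ℕ) (hT : 1 ≤ T) (G : ℕ → SimpleGraph V)
    (hE : ∀ t ∈ Icc 1 T, (G t).edgeSet.Nonempty)
    (ω : ℝ) (hω : 0 ≤ ω) (c d : ℕ) (hc : 2 ≤ c) (hd : 1 ≤ d) :
    ∃ (ℓ : ℕ) (t : ℕ → ℕ), 1 ≤ ℓ ∧ t 0 = 0 ∧ t ℓ = T ∧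
      (∀ i < ℓ, t i < t (i + 1) ∧ t (i + 1) - t i ≤ 2 * d) ∧
      (1 - (1 / (c : ℝ) + 2 / (d : ℝ))) * qTildeStar G T ω ≤
        ∑ i ∈ Finset.range ℓ, qTildeStarKI G (t i + 1) (t (i + 1)) ω c ∧
      ∑ i ∈ Finset.range ℓ, qTildeStarKI G (t i + 1) (t (i + 1)) ω c ≤
        qTildeStar G T ω := by
  classical
  have hm : ∀ s ∈ Icc 1 T, numEdges (G s) ≠ 0 := fun s hs => (numEdges_pos (G s) (hE s hs)).ne'
  have hc0 : 0 < c := by omega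
  haveI : Nonempty (Fin c) := ⟨⟨0, hc0⟩⟩
  set n : ℝ := (Fintype.card V : ℝ) with hn
  have hn0 : (0:ℝ) ≤ n := Nat.cast_nonneg _
  set D : ℕ := 2 * d with hD
  have hD0 : 0 < D := by omega
  set L : ℕ := (T + D - 1) / D with hLdef
  set t : ℕ → ℕ := fun i => min (D * i) T with htdef
  -- arithmetic facts
  have hL1 : 1 ≤ L := (Nat.one_le_div_iff hD0).mpr (by omega)
  have f1 : T + D - 1 < (T + D - 1) / D * D + D := Nat.lt_div_mul_add hD0
  have f2 : (T + D - 1) / D * D ≤ T + D - 1 := Nat.div_mul_le_self _ _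
  rw [← hLdef] at f1 f2
  have hTDL : T ≤ D * L := by
    have : L * D = D * L := Nat.mul_comm _ _
    omega
  have hDL1 : D * (L - 1) < T := by
    have e : D * (L - 1) + D = L * D := by
      have h1 : L - 1 + 1 = L := by omega
      calc D * (L - 1) + D = (L - 1 + 1) * D := by ring
        _ = L * D := by rw [h1]
    omega
  have ht0 : t 0 = 0 := by simp [htdef]
  have htL : t L = T := min_eq_right hTDL
  have htmono : ∀ i, t i ≤ t (i+1) := fun i =>
    min_le_min (Nat.mul_le_mul_left D (Nat.le_succ i)) (le_refl T)
  have htleT : ∀ i, t i ≤ T := fun i => min_le_right _ _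
  have htval : ∀ i < L, t i = D * i := by
    intro i hi
    have h1 : D * i ≤ D * (L - 1) := Nat.mul_le_mul_left D (by omega)
    exact min_eq_left (by omega)
  have hstep : ∀ i < L, t i < t (i + 1) ∧ t (i + 1) - t i ≤ 2 * d := by
    intro i hi
    have h1 : t i = D * i := htval i hi
    have h2 : D * i ≤ D * (L - 1) := Nat.mul_le_mul_left D (by omega)
    have h3 : D * i < D * (i + 1) := by
      have : D * (i+1) = D * i + D := by ring
      omega
    constructor
    · rw [h1, htdef]
      exact lt_min h3 (by omega)
    · have h4 : t (i+1) ≤ D * (i + 1) := min_le_left _ _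
      have h5 : D * (i+1) = D * i + D := by ring
      rw [h1]
      omega
  -- membership of windows in [1,T]
  have hmwin : ∀ i < L, ∀ s ∈ Icc (t i + 1) (t (i+1)), numEdges (G s) ≠ 0 := by
    intro i hi s hs
    rw [Finset.mem_Icc] at hs
    refine hm s (Finset.mem_Icc.mpr ⟨?_, ?_⟩)
    · exact le_trans (Nat.succ_le_succ (Nat.zero_le _)) hs.1
    · exact le_trans hs.2 (htleT (i+1))
  -- window index function
  have hwin : ∀ i < L, ∀ s, t i < s → s ≤ t (i+1) → (s - 1) / D = i := by
    intro i hi s h1 h2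
    have e1 : t i = D * i := htval i hi
    have e2 : t (i+1) ≤ D * (i+1) := min_le_left _ _
    refine Nat.div_eq_of_lt_le ?_ ?_
    · have : i * D = D * i := Nat.mul_comm _ _
      omega
    · have h3 : (i + 1) * D = D * i + D := by ring
      have h5 : D * (i+1) = D * i + D := by ring
      omega
  have hQ0 : 0 ≤ qTildeStar G T ω := qTildeStar_nonneg G T hT hm hω
  have hQloyal : ω * n * ((T:ℝ) - 1) ≤ qTildeStar G T ω := qTildeStar_ge_loyal G T hT hm hω
  have hbddT : BddAbove (Set.range fun π : V → ℕ → ℕ => qTildeI G 1 T ω π) :=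
    bddAbove_qTildeI G 1 T hω
  -- UPPER BOUND
  have hupper : ∑ i ∈ Finset.range L, qTildeStarKI G (t i + 1) (t (i + 1)) ω c ≤
      qTildeStar G T ω := by
    refine le_of_forall_pos_le_add ?_
    intro ε hε
    have hLpos : (0:ℝ) < (L:ℝ) := by exact_mod_cast hL1
    have hch : ∀ i, ∃ ρ : V → ℕ → Fin c, i < L →
        qTildeStarKI G (t i + 1) (t (i+1)) ω c - ε / (L:ℝ) < qTildeI G (t i + 1) (t (i+1)) ω ρ := by
      intro i
      by_cases hi : i < L
      · have hlt : qTildeStarKI G (t i + 1) (t (i+1)) ω c - ε / (L:ℝ)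
            < qTildeStarKI G (t i + 1) (t (i+1)) ω c := by
          have := div_pos hε hLpos
          linarith
        obtain ⟨ρ, hρ⟩ := exists_lt_of_lt_ciSup hlt
        exact ⟨ρ, fun _ => hρ⟩
      · exact ⟨fun _ _ => ⟨0, hc0⟩, fun h => absurd h hi⟩
    choose ρ hρ using hch
    set Pg : V → ℕ → ℕ := fun v s => c * ((s - 1) / D) + (ρ ((s - 1) / D) v s).val with hPg
    -- per-window snapshot identity
    have hsnapwin : ∀ i < L, ∀ s, t i < s → s ≤ t (i+1) →
        snapTerm (G s) (fun v => Pg v s) = snapTerm (G s) (fun v => ρ i v s) := by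
      intro i hi s h1 h2
      have hw := hwin i hi s h1 h2
      have heq : (fun v => Pg v s) = (fun v => (fun x : Fin c => c * i + x.val) (ρ i v s)) := by
        funext v
        rw [hPg]
        dsimp only
        rw [hw]
      rw [heq]
      exact snapTerm_relabel (G s) (fun v => ρ i v s) (fun x : Fin c => c * i + x.val)
        (fun u v => ⟨fun h => Fin.val_injective (Nat.add_left_cancel h), fun h => by rw [h]⟩)
    -- per-window loyalty identity
    have hloywin : ∀ i < L, ∀ s, t i < s → s ≤ t (i+1) - 1 → ∀ v : V,
        ind (Pg v s = Pg v (s+1)) = ind (ρ i v s = ρ i v (s+1)) := by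
      intro i hi s h1 h2 v
      have h2' : s ≤ t (i+1) := by omega
      have h3 : t i < s + 1 := by omega
      have h4 : s + 1 ≤ t (i+1) := by omega
      have hw1 := hwin i hi s h1 h2'
      have hw2 := hwin i hi (s+1) h3 h4
      have e1 : Pg v s = c * i + (ρ i v s).val := by
        rw [hPg]; dsimp only; rw [hw1]
      have e2 : Pg v (s+1) = c * i + (ρ i v (s+1)).val := by
        rw [hPg]; dsimp only; rw [hw2]
      rw [e1, e2]
      exact ind_congr ⟨fun h => Fin.val_injective (Nat.add_left_cancel h), fun h => by rw [h]⟩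
    -- glued partition dominates the window sum
    have hglue : ∑ i ∈ Finset.range L, qTildeI G (t i + 1) (t (i+1)) ω (ρ i)
        ≤ qTildeI G 1 T ω Pg := by
      rw [qTildeI_ind]
      have hsnapdec : (∑ s ∈ Icc 1 T, snapTerm (G s) fun v => Pg v s)
          = ∑ i ∈ Finset.range L, ∑ s ∈ Ioc (t i) (t (i+1)),
              snapTerm (G s) fun v => ρ i v s := by
        have hdec := sum_windows_eq t htmono (fun s => snapTerm (G s) fun v => Pg v s) L
        rw [ht0, htL] at hdec
        rw [Icc_one_eq_Ioc, ← hdec]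
        refine Finset.sum_congr rfl fun i hi => Finset.sum_congr rfl fun s hs => ?_
        rw [Finset.mem_Ioc] at hs
        exact hsnapwin i (Finset.mem_range.mp hi) s hs.1 hs.2
      have hloydec : ∑ i ∈ Finset.range L, ∑ v : V, ∑ s ∈ Icc (t i + 1) ((t (i+1)) - 1),
            ind (ρ i v s = ρ i v (s+1))
          ≤ ∑ v : V, ∑ s ∈ Icc 1 (T-1), ind (Pg v s = Pg v (s+1)) := by
        have hswap : (∑ v : V, ∑ s ∈ Icc 1 (T-1), ind (Pg v s = Pg v (s+1)))
            = ∑ s ∈ Ioc 0 (T-1), ∑ v : V, ind (Pg v s = Pg v (s+1)) := by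
          rw [Icc_one_eq_Ioc]
          exact Finset.sum_comm
        rw [hswap]
        have hstep1 : ∀ i ∈ Finset.range L, ∑ v : V, ∑ s ∈ Icc (t i + 1) ((t (i+1)) - 1),
              ind (ρ i v s = ρ i v (s+1))
            = ∑ s ∈ Ioc (t i) ((t (i+1)) - 1), ∑ v : V, ind (Pg v s = Pg v (s+1)) := by
          intro i hi
          rw [Icc_succ_eq_Ioc]
          rw [Finset.sum_comm]
          refine Finset.sum_congr rfl fun s hs => Finset.sum_congr rfl fun v _ => ?_
          rw [Finset.mem_Ioc] at hs
          exact (hloywin i (Finset.mem_range.mp hi) s hs.1 hs.2 v).symm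
        rw [Finset.sum_congr rfl hstep1]
        have hfin := sum_windows_le t htmono ht0
          (fun s => ∑ v : V, ind (Pg v s = Pg v (s+1)))
          (fun s => Finset.sum_nonneg fun v _ => ind_nonneg _) L
        rw [htL] at hfin
        exact hfin
      calc ∑ i ∈ Finset.range L, qTildeI G (t i + 1) (t (i+1)) ω (ρ i)
          = (∑ i ∈ Finset.range L, ∑ s ∈ Icc (t i + 1) (t (i+1)),
              snapTerm (G s) fun v => ρ i v s) +
            ω * ∑ i ∈ Finset.range L, ∑ v : V, ∑ s ∈ Icc (t i + 1) ((t (i+1)) - 1),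
              ind (ρ i v s = ρ i v (s+1)) := by
            rw [Finset.sum_congr rfl fun i (_ : i ∈ Finset.range L) => qTildeI_ind G _ _ ω (ρ i)]
            rw [Finset.sum_add_distrib, Finset.mul_sum]
        _ ≤ (∑ s ∈ Icc 1 T, snapTerm (G s) fun v => Pg v s) +
            ω * ∑ v : V, ∑ s ∈ Icc 1 (T-1), ind (Pg v s = Pg v (s+1)) := by
            have e1 : (∑ i ∈ Finset.range L, ∑ s ∈ Icc (t i + 1) (t (i+1)),
                snapTerm (G s) fun v => ρ i v s)
                = (∑ s ∈ Icc 1 T, snapTerm (G s) fun v => Pg v s) := by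
              rw [hsnapdec]
              exact Finset.sum_congr rfl fun i _ => by rw [Icc_succ_eq_Ioc]
            rw [e1]
            exact add_le_add_right (mul_le_mul_of_nonneg_left hloydec hω) _
    -- conclude upper bound
    have hQge : ∑ i ∈ Finset.range L, qTildeI G (t i + 1) (t (i+1)) ω (ρ i)
        ≤ qTildeStar G T ω := le_trans hglue (le_ciSup hbddT Pg)
    have hsum : ∑ i ∈ Finset.range L, qTildeStarKI G (t i + 1) (t (i + 1)) ω c
        ≤ ∑ i ∈ Finset.range L, (qTildeI G (t i + 1) (t (i+1)) ω (ρ i) + ε / (L:ℝ)) := by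
      refine Finset.sum_le_sum fun i hi => ?_
      have := hρ i (Finset.mem_range.mp hi)
      linarith
    rw [Finset.sum_add_distrib, Finset.sum_const, Finset.card_range, nsmul_eq_mul] at hsum
    have hLε : (L:ℝ) * (ε / (L:ℝ)) = ε := by field_simp
    rw [hLε] at hsum
    linarith
  -- LOWER BOUND
  have hc1 : (0:ℝ) < 1 - 1/(c:ℝ) := by
    have h2 : (2:ℝ) ≤ (c:ℝ) := by exact_mod_cast hc
    have hcpos : (0:ℝ) < (c:ℝ) := by linarith
    have : 1/(c:ℝ) ≤ 1/2 := by
      rw [div_le_div_iff₀ hcpos (by norm_num)]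
      linarith
    linarith
  have hlower : (1 - (1 / (c : ℝ) + 2 / (d : ℝ))) * qTildeStar G T ω ≤
      ∑ i ∈ Finset.range L, qTildeStarKI G (t i + 1) (t (i + 1)) ω c := by
    have hd0 : (0:ℝ) < (d:ℝ) := by exact_mod_cast hd
    have key : ∀ π : V → ℕ → ℕ, (1 - 1/(c:ℝ)) * qTildeI G 1 T ω π ≤
        (∑ i ∈ Finset.range L, qTildeStarKI G (t i + 1) (t (i + 1)) ω c) +
          (2/(d:ℝ)) * qTildeStar G T ω := by
      intro π
      have hwsup : ∀ i ∈ Finset.range L,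
          (1 - 1/(c:ℝ)) * (∑ s ∈ Icc (t i + 1) (t (i+1)), snapTerm (G s) fun v => π v s) +
            ω * ∑ v : V, ∑ s ∈ Icc (t i + 1) ((t (i+1)) - 1), ind (π v s = π v (s+1))
          ≤ qTildeStarKI G (t i + 1) (t (i+1)) ω c := by
        intro i hi
        obtain ⟨ρ', hρ'⟩ := window_c G (t i + 1) (t (i+1))
          (hmwin i (Finset.mem_range.mp hi)) hω hc0 π
        exact le_trans hρ' (le_ciSup (bddAbove_qTildeI G (t i + 1) (t (i+1)) hω) ρ')
      set H : ℕ → ℝ := fun s => ∑ v : V, ind (π v s = π v (s+1)) with hH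
      have hH0 : ∀ s, 0 ≤ H s := fun s => Finset.sum_nonneg fun v _ => ind_nonneg _
      have hHn : ∀ s, H s ≤ n := by
        intro s
        rw [hH]
        calc ∑ v : V, ind (π v s = π v (s+1)) ≤ ∑ _v : V, (1:ℝ) :=
            Finset.sum_le_sum fun v _ => ind_le_one _
          _ = n := by rw [Finset.sum_const, Finset.card_univ, nsmul_eq_mul, mul_one]
      have hsumw : (1 - 1/(c:ℝ)) * (∑ s ∈ Icc 1 T, snapTerm (G s) fun v => π v s) +
            ω * ∑ i ∈ Finset.range L, ∑ s ∈ Ioc (t i) ((t (i+1)) - 1), H s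
          ≤ ∑ i ∈ Finset.range L, qTildeStarKI G (t i + 1) (t (i + 1)) ω c := by
        have e1 : (∑ s ∈ Icc 1 T, snapTerm (G s) fun v => π v s)
            = ∑ i ∈ Finset.range L, ∑ s ∈ Icc (t i + 1) (t (i+1)),
                snapTerm (G s) fun v => π v s := by
          have hdec := sum_windows_eq t htmono (fun s => snapTerm (G s) fun v => π v s) L
          rw [ht0, htL] at hdec
          rw [Icc_one_eq_Ioc, ← hdec]
          exact Finset.sum_congr rfl fun i _ => by rw [Icc_succ_eq_Ioc]
        have e2 : ∀ i ∈ Finset.range L, ∑ s ∈ Ioc (t i) ((t (i+1)) - 1), H s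
            = ∑ v : V, ∑ s ∈ Icc (t i + 1) ((t (i+1)) - 1), ind (π v s = π v (s+1)) := by
          intro i _
          rw [Icc_succ_eq_Ioc]
          exact Finset.sum_comm
        calc (1 - 1/(c:ℝ)) * (∑ s ∈ Icc 1 T, snapTerm (G s) fun v => π v s) +
              ω * ∑ i ∈ Finset.range L, ∑ s ∈ Ioc (t i) ((t (i+1)) - 1), H s
            = ∑ i ∈ Finset.range L,
                ((1 - 1/(c:ℝ)) * (∑ s ∈ Icc (t i + 1) (t (i+1)),
                    snapTerm (G s) fun v => π v s) +
                  ω * ∑ v : V, ∑ s ∈ Icc (t i + 1) ((t (i+1)) - 1),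
                    ind (π v s = π v (s+1))) := by
              rw [Finset.sum_add_distrib]
              congr 1
              · rw [e1, Finset.mul_sum]
              · rw [Finset.mul_sum]
                exact Finset.sum_congr rfl fun i hi => by rw [e2 i hi]
          _ ≤ _ := Finset.sum_le_sum hwsup
      have hloyglob : (∑ v : V, ∑ s ∈ Icc 1 (T-1), ind (π v s = π v (s+1)))
          = ∑ s ∈ Ioc 0 (T-1), H s := by
        rw [Icc_one_eq_Ioc]
        exact Finset.sum_comm
      have hqT : qTildeI G 1 T ω π = (∑ s ∈ Icc 1 T, snapTerm (G s) fun v => π v s) +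
          ω * ∑ s ∈ Ioc 0 (T-1), H s := by
        rw [qTildeI_ind, hloyglob]
      rcases Nat.lt_or_ge L 2 with hL2 | hL2
      · -- L = 1 : single window, loyalty exact
        have hLeq : L = 1 := by omega
        have hloyeq : ∑ i ∈ Finset.range L, ∑ s ∈ Ioc (t i) ((t (i+1)) - 1), H s
            = ∑ s ∈ Ioc 0 (T-1), H s := by
          rw [hLeq, Finset.sum_range_one, ht0]
          have h01 : t (0 + 1) = T := by
            rw [show 0 + 1 = L from by omega, htL]
          rw [h01]
        have h1 := hsumw
        rw [hloyeq] at h1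
        have h2 : (0:ℝ) ≤ (2/(d:ℝ)) * qTildeStar G T ω := by positivity
        have h3 : (0:ℝ) ≤ ω * ((1/(c:ℝ)) * ∑ s ∈ Ioc 0 (T-1), H s) := by
          have h4 := Finset.sum_nonneg (fun s (_ : s ∈ Ioc 0 (T-1)) => hH0 s)
          have hcpos : (0:ℝ) < (c:ℝ) := by positivity
          positivity
        rw [hqT]
        have expand : (1 - 1/(c:ℝ)) * ((∑ s ∈ Icc 1 T, snapTerm (G s) fun v => π v s) +
              ω * ∑ s ∈ Ioc 0 (T-1), H s)
            = (1 - 1/(c:ℝ)) * (∑ s ∈ Icc 1 T, snapTerm (G s) fun v => π v s) +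
              ω * ∑ s ∈ Ioc 0 (T-1), H s - ω * ((1/(c:ℝ)) * ∑ s ∈ Ioc 0 (T-1), H s) := by
          ring
        linarith
      · -- L ≥ 2
        have hgap := sum_windows_ge t htmono ht0 H hH0 hHn hn0 L T htL hT
        have hdL : d * L ≤ T - 1 := by
          have h1 : D * (L - 1) < T := hDL1
          have h2 : d * L ≤ D * (L - 1) := by
            rw [hD]
            have h3 : 2 * d * (L - 1) = d * (2 * (L - 1)) := by ring
            rw [h3]
            exact Nat.mul_le_mul_left d (by omega)
          omega
        have hdLr : (d:ℝ) * (L:ℝ) ≤ (T:ℝ) - 1 := by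
          have h5 : ((d * L : ℕ) : ℝ) ≤ ((T - 1 : ℕ) : ℝ) := by exact_mod_cast hdL
          rw [Nat.cast_mul] at h5
          rw [Nat.cast_sub hT, Nat.cast_one] at h5
          exact h5
        have hLn : ω * ((L:ℝ) * n) ≤ (1/(d:ℝ)) * (ω * n * ((T:ℝ) - 1)) := by
          rw [div_mul_eq_mul_div, le_div_iff₀ hd0]
          have h1 : ω * ((L:ℝ) * n) * (d:ℝ) = ω * n * ((d:ℝ) * (L:ℝ)) := by ring
          rw [h1, one_mul]
          exact mul_le_mul_of_nonneg_left hdLr (mul_nonneg hω hn0)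
        have hLn2 : ω * ((L:ℝ) * n) ≤ (2/(d:ℝ)) * qTildeStar G T ω := by
          have h1 : (1/(d:ℝ)) * (ω * n * ((T:ℝ) - 1)) ≤ (1/(d:ℝ)) * qTildeStar G T ω :=
            mul_le_mul_of_nonneg_left hQloyal (by positivity)
          have h2 : (1/(d:ℝ)) * qTildeStar G T ω ≤ (2/(d:ℝ)) * qTildeStar G T ω := by
            have h3 : (1/(d:ℝ)) ≤ 2/(d:ℝ) := by
              rw [div_le_div_iff₀ hd0 hd0]
              nlinarith
            exact mul_le_mul_of_nonneg_right h3 hQ0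
          linarith
        have hloyge : ω * (∑ s ∈ Ioc 0 (T-1), H s)
            ≤ ω * (∑ i ∈ Finset.range L, ∑ s ∈ Ioc (t i) ((t (i+1)) - 1), H s) +
              ω * ((L:ℝ) * n) := by
          have h6 := mul_le_mul_of_nonneg_left hgap hω
          rw [mul_add] at h6
          linarith
        have hSnn : (0:ℝ) ≤ ω * ((1/(c:ℝ)) * ∑ s ∈ Ioc 0 (T-1), H s) := by
          have h7 := Finset.sum_nonneg (fun s (_ : s ∈ Ioc 0 (T-1)) => hH0 s)
          have hcpos : (0:ℝ) < (c:ℝ) := by positivity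
          positivity
        rw [hqT]
        have expand : (1 - 1/(c:ℝ)) * ((∑ s ∈ Icc 1 T, snapTerm (G s) fun v => π v s) +
              ω * ∑ s ∈ Ioc 0 (T-1), H s)
            = (1 - 1/(c:ℝ)) * (∑ s ∈ Icc 1 T, snapTerm (G s) fun v => π v s) +
              ω * ∑ s ∈ Ioc 0 (T-1), H s - ω * ((1/(c:ℝ)) * ∑ s ∈ Ioc 0 (T-1), H s) := by
          ring
        linarith
    have hsup : qTildeStar G T ω ≤
        ((∑ i ∈ Finset.range L, qTildeStarKI G (t i + 1) (t (i + 1)) ω c) +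
          (2/(d:ℝ)) * qTildeStar G T ω) / (1 - 1/(c:ℝ)) := by
      refine ciSup_le fun π => ?_
      rw [le_div_iff₀ hc1]
      have h8 := key π
      linarith
    rw [le_div_iff₀ hc1] at hsup
    have expand2 : (1 - (1 / (c : ℝ) + 2 / (d : ℝ))) * qTildeStar G T ω
        = qTildeStar G T ω * (1 - 1/(c:ℝ)) - (2/(d:ℝ)) * qTildeStar G T ω := by ring
    linarith
  exact ⟨L, t, hL1, ht0, htL, hstep, hlower, hupper⟩

end TemporalModularity
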